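/- Let G be a DAG with topological ordering ord, and let u, v be vertices with ord(v) < ord(u) and no directed path from v to u in G. Suppose a ⇝ u and v ⇝ d in G, and ord(d) ≤ ord(a). Then a and d are incomparable in G (neither a ⇝ d nor d ⇝ a holds in G), but in G+(u,v) the relation a ⇝ d holds; i.e., the ordered pair (a,d) becomes comparable for the first time upon insertion of the edge (u,v). -/

import Mathlib

/-- Reachability: a directed path (possibly of length 0) from `x` to `y`. -/
def Reach {V : Type*} (E : V → V → Prop) : V → V → Prop :=
  Relation.ReflTransGen E

/-- A digraph is acyclic if it has no directed cycle. -/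
def Acyclic {V : Type*} (E : V → V → Prop) : Prop :=
  ∀ x, ¬ Relation.TransGen E x x

/-- `ord` is a topological ordering of the digraph `E`. -/
def IsTopOrd {V : Type*} {n : ℕ} (E : V → V → Prop) (ord : V ≃ Fin n) : Prop :=
  ∀ a b, E a b → ord a < ord b

/-- The graph `G + (u,v)`: the edge `(u,v)` is added to `E`. -/
def AddEdge {V : Type*} (E : V → V → Prop) (u v : V) : V → V → Prop :=
  fun a b => E a b ∨ (a = u ∧ b = v)

/-- `A = {x : ord v ≤ ord x ≤ ord u and x ⇝ u}`. -/
def AncS {V : Type*} {n : ℕ} (E : V → V → Prop) (ord : V ≃ Fin n) (u v : V) : Set V :=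
  {x | ord v ≤ ord x ∧ ord x ≤ ord u ∧ Reach E x u}

/-- `D = {x : ord v ≤ ord x ≤ ord u and v ⇝ x}`. -/
def DesS {V : Type*} {n : ℕ} (E : V → V → Prop) (ord : V ≃ Fin n) (u v : V) : Set V :=
  {x | ord v ≤ ord x ∧ ord x ≤ ord u ∧ Reach E v x}

/-- `ord'` is a canonical reordering for `ord, u, v`: conditions (a)-(d). -/
def IsCanonical {V : Type*} {n : ℕ} (E : V → V → Prop) (ord ord' : V ≃ Fin n)
    (u v : V) : Prop :=
  (∀ x, x ∉ AncS E ord u v ∪ DesS E ord u v → ord' x = ord x) ∧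
  (⇑ord' '' (AncS E ord u v ∪ DesS E ord u v) =
    ⇑ord '' (AncS E ord u v ∪ DesS E ord u v)) ∧
  (∀ x y, (x ∈ AncS E ord u v ∧ y ∈ AncS E ord u v) ∨
          (x ∈ DesS E ord u v ∧ y ∈ DesS E ord u v) →
      (ord' x < ord' y ↔ ord x < ord y)) ∧
  (∀ x ∈ AncS E ord u v, ∀ y ∈ DesS E ord u v, ord' x < ord' y)


private lemma reach_ord_le {V : Type*} {n : ℕ} {E : V → V → Prop}
    {ord : V ≃ Fin n} (htop : IsTopOrd E ord) {x y : V} (h : Reach E x y) :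
    ord x ≤ ord y := by
  induction h with
  | refl => exact le_refl _
  | tail _ he ih => exact le_of_lt (lt_of_le_of_lt ih (htop _ _ he))

/-- an ancestor `a` of `u` and a descendant `d` of `v` with
`ord d ≤ ord a` are incomparable in `G`, but become comparable (`a ⇝ d`) in
`G + (u,v)`. -/
theorem newly_comparable_pair {V : Type*} [Fintype V] {n : ℕ}
    (E : V → V → Prop) (hacyc : Acyclic E)
    (ord : V ≃ Fin n) (htop : IsTopOrd E ord)
    (u v : V) (huv : ord v < ord u) (hnr : ¬ Reach E v u)
    (a d : V) (ha : Reach E a u) (hd : Reach E v d) (hord : ord d ≤ ord a) :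
    (¬ Reach E a d ∧ ¬ Reach E d a) ∧ Reach (AddEdge E u v) a d := by
  refine ⟨⟨?_, ?_⟩, ?_⟩
  · intro had
    have h1 : ord a ≤ ord d := reach_ord_le htop had
    have : a = d := ord.injective (le_antisymm h1 hord)
    subst this
    exact hnr (hd.trans ha)
  · intro hda
    exact hnr (hd.trans (hda.trans ha))
  · have lift : ∀ x y, Reach E x y → Reach (AddEdge E u v) x y := by
      intro x y h
      exact Relation.ReflTransGen.mono (p := AddEdge E u v) (fun p q e => Or.inl e) x y h
    exact (lift a u ha).trans ((Relation.ReflTransGen.single (show AddEdge E u v u v from Or.inr ⟨rfl, rfl⟩)).trans (lift v d hd))
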